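/- Let L be a quasi-definite Toeplitz bilinear form on C[z,z⁻¹], and let {f_n, g_n} be monic right bi-orthogonal L-polynomials with five-term recurrence coefficients z f_n = Σ_{i=n−2}^{n+2} α_{n,i} f_i. Then α_{2n−1, 2n−3} = 0 and α_{2n, 2n+2} = 0 for all n ≥ 1: i.e., the CMV matrix A₁, although pentadiagonal, has zero entries in positions (2n−1, 2n−3) and (2n, 2n+2). -/

import Mathlib

open LaurentPolynomial

/-- `𝕃⁺_n`: for `n = 2m` the span of `z^{−m},…,z^m`; for `n = 2m+1` the span of
`z^{−m},…,z^{m+1}`. -/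
noncomputable def Lplus (n : ℕ) : Submodule ℂ (LaurentPolynomial ℂ) :=
  Submodule.span ℂ {p | ∃ m : ℤ, -((n : ℤ) / 2) ≤ m ∧ m ≤ ((n : ℤ) + 1) / 2 ∧ p = T m}

/-- `𝕃⁻_n`: for `n = 2m` the span of `z^{−m},…,z^m`; for `n = 2m+1` the span of
`z^{−m−1},…,z^m`. -/
noncomputable def Lminus (n : ℕ) : Submodule ℂ (LaurentPolynomial ℂ) :=
  Submodule.span ℂ {p | ∃ m : ℤ, -(((n : ℤ) + 1) / 2) ≤ m ∧ m ≤ (n : ℤ) / 2 ∧ p = T m}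

/-- `𝕃⁺_{n−1}`, with the convention `𝕃⁺_{−1} = {0}`. -/
noncomputable def LplusPred : ℕ → Submodule ℂ (LaurentPolynomial ℂ)
  | 0 => ⊥
  | n + 1 => Lplus n

/-- `𝕃⁻_{n−1}`, with the convention `𝕃⁻_{−1} = {0}`. -/
noncomputable def LminusPred : ℕ → Submodule ℂ (LaurentPolynomial ℂ)
  | 0 => ⊥
  | n + 1 => Lminus n

/-- `{f_n, g_n}` is a sequence of right bi-orthogonal Laurent polynomials for `L`. -/
def IsRightBiOrtho (L : LaurentPolynomial ℂ →ₗ[ℂ] LaurentPolynomial ℂ →ₗ[ℂ] ℂ)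
    (f g : ℕ → LaurentPolynomial ℂ) : Prop :=
  (∀ n, f n ∈ Lplus n ∧ f n ∉ LplusPred n ∧ g n ∈ Lplus n ∧ g n ∉ LplusPred n) ∧
  ∃ h : ℕ → ℂ, (∀ n, h n ≠ 0) ∧ ∀ m n, L (f m) (g n) = if m = n then h n else 0


/-- The pair `{f_n, g_n}` is monic: the coefficient of `z^{−n}` in `f_{2n}, g_{2n}`
and of `z^{n+1}` in `f_{2n+1}, g_{2n+1}` equals `1`. -/
def IsMonicPair (f g : ℕ → LaurentPolynomial ℂ) : Prop :=
  ∀ n : ℕ, if Even n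
    then (f n).coeff (-((n : ℤ) / 2)) = 1 ∧ (g n).coeff (-((n : ℤ) / 2)) = 1
    else (f n).coeff (((n : ℤ) + 1) / 2) = 1 ∧ (g n).coeff (((n : ℤ) + 1) / 2) = 1

/-- For a quasi-definite Toeplitz bilinear form `L` with monic right bi-orthogonal
Laurent polynomials `{f_n, g_n}` and five-term recurrence
`z f_n = Σ_{i≤n+2} α_{n,i} f_i`, the coefficients `α_{2n−1,2n−3}` and
`α_{2n,2n+2}` vanish for all `n ≥ 1` (the first one being a coefficient only when
`2n − 3 ≥ 0`, i.e. the index `2n − 3` is interpreted in `ℤ`). -/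
lemma Lplus_eq_supported (n : ℕ) :
    Lplus n = AddMonoidAlgebra.supported ℂ ℂ {m : ℤ | -((n:ℤ)/2) ≤ m ∧ m ≤ ((n:ℤ)+1)/2} := by
  rw [AddMonoidAlgebra.supported_eq_span_single, Lplus]
  congr 1
  ext p
  simp only [Set.mem_image, Set.mem_setOf_eq]
  constructor
  · rintro ⟨m, h1, h2, rfl⟩; exact ⟨m, ⟨h1, h2⟩, rfl⟩
  · rintro ⟨m, ⟨h1, h2⟩, rfl⟩; exact ⟨m, h1, h2, rfl⟩

lemma mem_Lplus {n : ℕ} {p : LaurentPolynomial ℂ} :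
    p ∈ Lplus n ↔ ∀ k : ℤ, p.coeff k ≠ 0 → -((n:ℤ)/2) ≤ k ∧ k ≤ ((n:ℤ)+1)/2 := by
  rw [Lplus_eq_supported, AddMonoidAlgebra.mem_supported]
  constructor
  · intro hsub k hk; exact hsub (Finsupp.mem_support_iff.2 hk)
  · intro hb k hk; exact hb k (Finsupp.mem_support_iff.1 hk)

lemma T_mem_Lplus {n : ℕ} {m : ℤ} (h1 : -((n:ℤ)/2) ≤ m) (h2 : m ≤ ((n:ℤ)+1)/2) :
    (T m : LaurentPolynomial ℂ) ∈ Lplus n :=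
  Submodule.subset_span ⟨m, h1, h2, rfl⟩

lemma mul_T_mem {n n' : ℕ} {a : ℤ}
    (hb : ∀ k : ℤ, -((n:ℤ)/2) ≤ k → k ≤ ((n:ℤ)+1)/2 →
      -((n':ℤ)/2) ≤ a + k ∧ a + k ≤ ((n':ℤ)+1)/2)
    {p : LaurentPolynomial ℂ} (hp : p ∈ Lplus n) : T a * p ∈ Lplus n' := by
  induction hp using Submodule.span_induction with
  | mem x hx =>
      obtain ⟨m, h1, h2, rfl⟩ := hx
      rw [← T_add]
      exact T_mem_Lplus (hb m h1 h2).1 (hb m h1 h2).2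
  | zero => simpa using (Lplus n').zero_mem
  | add x y _ _ hx hy => rw [mul_add]; exact (Lplus n').add_mem hx hy
  | smul c x _ hx => rw [mul_smul_comm]; exact (Lplus n').smul_mem c hx

/-- The "new" exponent appearing at step `n`. -/
noncomputable def eIdx (n : ℕ) : ℤ := if Even n then -((n:ℤ)/2) else ((n:ℤ)+1)/2

lemma eIdx_mem (n : ℕ) : -((n:ℤ)/2) ≤ eIdx n ∧ eIdx n ≤ ((n:ℤ)+1)/2 := by
  unfold eIdx
  rcases Nat.even_or_odd n with he | ho
  · obtain ⟨t, rfl⟩ := he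
    rw [if_pos ⟨t, rfl⟩]; push_cast; omega
  · obtain ⟨t, rfl⟩ := ho
    rw [if_neg (by rw [Nat.even_add_one]; simp [Nat.even_mul])]
    push_cast; omega

lemma mem_Lplus_of_eIdx_zero {n : ℕ} {p : LaurentPolynomial ℂ}
    (hp : p ∈ Lplus (n + 1)) (h0 : p.coeff (eIdx (n + 1)) = 0) : p ∈ Lplus n := by
  rw [mem_Lplus] at hp ⊢
  intro k hk
  have hne : k ≠ eIdx (n + 1) := fun e => hk (e ▸ h0)
  have := hp k hk
  unfold eIdx at hne
  rcases Nat.even_or_odd (n + 1) with he | ho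
  · rw [if_pos he] at hne
    obtain ⟨t, ht⟩ := he
    push_cast [ht] at this hne ⊢; omega
  · rw [if_neg (Nat.not_even_iff_odd.2 ho)] at hne
    obtain ⟨t, ht⟩ := ho
    push_cast [ht] at this hne ⊢; omega

lemma Lplus_le_span (F : ℕ → LaurentPolynomial ℂ) (hF : ∀ n, F n ∈ Lplus n)
    (hm : ∀ n, (F n).coeff (eIdx n) = 1) :
    ∀ m : ℕ, (Lplus m : Set (LaurentPolynomial ℂ)) ⊆
      (Submodule.span ℂ (F '' Set.Iic m) : Submodule ℂ (LaurentPolynomial ℂ)) := by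
  intro m
  induction m with
  | zero =>
      intro p hp
      have he0 : eIdx 0 = 0 := by simp [eIdx]
      have hF0 : F 0 = T 0 := by
        ext k
        rcases eq_or_ne k 0 with rfl | hk
        · rw [T_apply, if_pos rfl]
          simpa [he0] using hm 0
        · have := mem_Lplus.1 (hF 0) k
          simp only [T_apply, if_neg (Ne.symm hk)]
          by_contra hne
          have := this hne
          omega
      have hp0 : p = p.coeff 0 • F 0 := by
        ext k
        rcases eq_or_ne k 0 with rfl | hk
        · rw [AddMonoidAlgebra.coeff_smul_apply, hF0, T_apply, if_pos rfl, smul_eq_mul, mul_one]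
        · have hk0 : p.coeff k = 0 := by
            by_contra hne
            have := mem_Lplus.1 hp k hne
            omega
          rw [hk0, AddMonoidAlgebra.coeff_smul_apply, hF0, T_apply, if_neg (Ne.symm hk), smul_eq_mul, mul_zero]
      rw [hp0]
      exact Submodule.smul_mem _ _ (Submodule.subset_span ⟨0, Set.mem_Iic.2 le_rfl, rfl⟩)
  | succ m ih =>
      intro p hp
      set c := p.coeff (eIdx (m + 1)) with hc
      have hq : p - c • F (m + 1) ∈ Lplus m := by
        refine mem_Lplus_of_eIdx_zero (Submodule.sub_mem _ hp
          (Submodule.smul_mem _ _ (hF (m + 1)))) ?_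
        rw [AddMonoidAlgebra.coeff_sub, Finsupp.sub_apply, AddMonoidAlgebra.coeff_smul_apply, hm (m + 1), smul_eq_mul, mul_one, hc,
          sub_self]
      have h1 : p - c • F (m + 1) ∈ Submodule.span ℂ (F '' Set.Iic (m + 1)) :=
        Submodule.span_mono (Set.image_mono (Set.Iic_subset_Iic.2 (Nat.le_succ m))) (ih hq)
      have h2 : c • F (m + 1) ∈ Submodule.span ℂ (F '' Set.Iic (m + 1)) :=
        Submodule.smul_mem _ _ (Submodule.subset_span ⟨m + 1, Set.mem_Iic.2 le_rfl, rfl⟩)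
      simpa using Submodule.add_mem _ h1 h2

section Orth

variable (L : LaurentPolynomial ℂ →ₗ[ℂ] LaurentPolynomial ℂ →ₗ[ℂ] ℂ)

lemma orth_left (f g : ℕ → LaurentPolynomial ℂ) (h : ℕ → ℂ)
    (horth : ∀ m n, L (f m) (g n) = if m = n then h n else 0)
    {j m : ℕ} (hmj : m < j) {q : LaurentPolynomial ℂ}
    (hq : q ∈ Submodule.span ℂ (g '' Set.Iic m)) : L (f j) q = 0 := by
  induction hq using Submodule.span_induction with
  | mem x hx =>
      obtain ⟨i, hi, rfl⟩ := hx
      rw [horth, if_neg (by have := Set.mem_Iic.mp hi; omega)]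
  | zero => simp
  | add x y _ _ hx hy => rw [map_add, hx, hy, add_zero]
  | smul c x _ hx => rw [map_smul, hx, smul_zero]

lemma orth_right (f g : ℕ → LaurentPolynomial ℂ) (h : ℕ → ℂ)
    (horth : ∀ m n, L (f m) (g n) = if m = n then h n else 0)
    {j m : ℕ} (hmj : m < j) {p : LaurentPolynomial ℂ}
    (hp : p ∈ Submodule.span ℂ (f '' Set.Iic m)) : L p (g j) = 0 := by
  induction hp using Submodule.span_induction with
  | mem x hx =>
      obtain ⟨i, hi, rfl⟩ := hx
      rw [horth, if_neg (by have := Set.mem_Iic.mp hi; omega)]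
  | zero => simp
  | add x y _ _ hx hy => rw [map_add, LinearMap.add_apply, hx, hy, add_zero]
  | smul c x _ hx => rw [map_smul, LinearMap.smul_apply, hx, smul_zero]

lemma L_shift (hT : ∀ m n : ℤ, L (T m) (T n) = L (T (m - n)) 1) :
    ∀ p q : LaurentPolynomial ℂ, L (T 1 * p) (T 1 * q) = L p q := by
  have htop : ∀ r : LaurentPolynomial ℂ,
      r ∈ Submodule.span ℂ ((fun i : ℤ => (AddMonoidAlgebra.single i 1 : LaurentPolynomial ℂ)) '' Set.univ) := by
    intro r
    rw [← AddMonoidAlgebra.supported_eq_span_single, AddMonoidAlgebra.mem_supported]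
    exact Set.subset_univ _
  intro p q
  induction htop p using Submodule.span_induction with
  | mem x hx =>
      obtain ⟨a, -, rfl⟩ := hx
      induction htop q using Submodule.span_induction with
      | mem y hy =>
          obtain ⟨b, -, rfl⟩ := hy
          show L (T 1 * T a) (T 1 * T b) = L (T a) (T b)
          rw [← T_add, ← T_add, hT, hT a b]
          ring_nf
      | zero => simp only [mul_zero, map_zero]
      | add y z _ _ hy hz =>
          rw [mul_add, map_add, map_add, hy, hz]
      | smul c y _ hy =>
          rw [mul_smul_comm, map_smul, map_smul, hy]
  | zero => simp only [mul_zero, map_zero, LinearMap.zero_apply]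
  | add x y _ _ hx hy =>
      rw [mul_add, map_add, map_add, LinearMap.add_apply, LinearMap.add_apply, hx, hy]
  | smul c x _ hx =>
      rw [mul_smul_comm, map_smul, map_smul, LinearMap.smul_apply, LinearMap.smul_apply, hx]

end Orth

section MainAux

lemma monic_f {f g : ℕ → LaurentPolynomial ℂ} (hmonic : IsMonicPair f g) :
    ∀ n, (f n).coeff (eIdx n) = 1 := by
  intro n
  have := hmonic n
  unfold eIdx
  by_cases he : Even n
  · rw [if_pos he]; rw [if_pos he] at this; exact this.1
  · rw [if_neg he]; rw [if_neg he] at this; exact this.1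

lemma monic_g {f g : ℕ → LaurentPolynomial ℂ} (hmonic : IsMonicPair f g) :
    ∀ n, (g n).coeff (eIdx n) = 1 := by
  intro n
  have := hmonic n
  unfold eIdx
  by_cases he : Even n
  · rw [if_pos he]; rw [if_pos he] at this; exact this.2
  · rw [if_neg he]; rw [if_neg he] at this; exact this.2

end MainAux

theorem CMV_pentadiagonal_zero_entries
    (L : LaurentPolynomial ℂ →ₗ[ℂ] LaurentPolynomial ℂ →ₗ[ℂ] ℂ)
    (hT : ∀ m n : ℤ, L (T m) (T n) = L (T (m - n)) 1)
    (hQD : ∀ n : ℕ, (Matrix.of fun k l : Fin (n + 1) =>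
      L (T (k : ℤ)) (T (l : ℤ))).det ≠ 0)
    (f g : ℕ → LaurentPolynomial ℂ)
    (hmem : ∀ n, f n ∈ Lplus n ∧ f n ∉ LplusPred n ∧ g n ∈ Lplus n ∧ g n ∉ LplusPred n)
    (h : ℕ → ℂ) (hh : ∀ n, h n ≠ 0)
    (horth : ∀ m n, L (f m) (g n) = if m = n then h n else 0)
    (hmonic : IsMonicPair f g)
    (α : ℕ → ℕ → ℂ)
    (hα : ∀ n, T 1 * f n = ∑ i ∈ Finset.range (n + 3), α n i • f i) :
    ∀ n : ℕ, 1 ≤ n →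
      (∀ i : ℕ, (i : ℤ) = 2 * (n : ℤ) - 3 → α (2 * n - 1) i = 0) ∧
      α (2 * n) (2 * n + 2) = 0 := by
  -- the recurrence coefficients are `L`-moments of `z f_N` against `g_j`
  have key : ∀ N j : ℕ, j < N + 3 → L (T 1 * f N) (g j) = α N j * h j := by
    intro N j hj
    rw [hα N, map_sum, LinearMap.sum_apply]
    have hterm : ∀ i ∈ Finset.range (N + 3),
        L (α N i • f i) (g j) = if i = j then α N j * h j else 0 := by
      intro i _
      rw [map_smul, LinearMap.smul_apply, horth, smul_eq_mul]
      split_ifs with hij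
      · rw [hij]
      · rw [mul_zero]
    rw [Finset.sum_congr rfl hterm,
      Finset.sum_ite_eq' (Finset.range (N + 3)) j (fun _ => α N j * h j),
      if_pos (Finset.mem_range.2 hj)]
  intro n hn
  constructor
  · -- α_{2n−1, 2n−3} = 0
    intro i hi
    have hn2 : 2 ≤ n := by omega
    have hi' : i = 2 * n - 3 := by omega
    have hkey := key (2 * n - 1) i (by omega)
    -- `z⁻¹ g_{2n−3} ∈ 𝕃⁺_{2n−2}`
    have hg : T (-1) * g i ∈ Lplus (2 * n - 2) := by
      refine mul_T_mem (fun k hk1 hk2 => ?_) (hmem i).2.2.1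
      omega
    have hspan : T (-1) * g i ∈ Submodule.span ℂ (g '' Set.Iic (2 * n - 2)) :=
      Lplus_le_span g (fun m => (hmem m).2.2.1) (monic_g hmonic) _ hg
    have hzero : L (f (2 * n - 1)) (T (-1) * g i) = 0 :=
      orth_left L f g h horth (by omega) hspan
    have e1 : T 1 * (T (-1) * g i) = g i := by
      rw [← mul_assoc, ← T_add]
      norm_num
    have hconn : L (T 1 * f (2 * n - 1)) (g i) = L (f (2 * n - 1)) (T (-1) * g i) := by
      conv_lhs => rw [← e1]
      exact L_shift L hT _ _
    have : α (2 * n - 1) i * h i = 0 := by rw [← hkey, hconn, hzero]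
    exact (mul_eq_zero.1 this).resolve_right (hh i)
  · -- α_{2n, 2n+2} = 0
    have hkey := key (2 * n) (2 * n + 2) (by omega)
    have hf : T 1 * f (2 * n) ∈ Lplus (2 * n + 1) := by
      refine mul_T_mem (fun k hk1 hk2 => ?_) (hmem (2 * n)).1
      omega
    have hspan : T 1 * f (2 * n) ∈ Submodule.span ℂ (f '' Set.Iic (2 * n + 1)) :=
      Lplus_le_span f (fun m => (hmem m).1) (monic_f hmonic) _ hf
    have hzero : L (T 1 * f (2 * n)) (g (2 * n + 2)) = 0 :=
      orth_right L f g h horth (by omega) hspan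
    have : α (2 * n) (2 * n + 2) * h (2 * n + 2) = 0 := by rw [← hkey, hzero]
    exact (mul_eq_zero.1 this).resolve_right (hh (2 * n + 2))
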